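/- Let θ₊, θ₋ ∈ ℝ with θ₋ · θ₊ > 0, and let h : ℝ → ℝ be defined by h(x) = θ₊x for x ≥ 0 and h(x) = θ₋x for x < 0. Then the metric injection bound of h around 0 equals min{|θ₊|, |θ₋|}: inj(h, 0) = min{|θ₊|, |θ₋|}. -/
import Mathlib


open Set

/-- For the p.h. function `h(x) = θ₊x (x ≥ 0), θ₋x (x < 0)` with `θ₋ · θ₊ > 0`,
the metric injection bound of `h` around `0` equals `min {|θ₊|, |θ₋|}`. -/
theorem stmt13 (θp θm : ℝ) (hθ : 0 < θm * θp) (h : ℝ → ℝ)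
    (hh : ∀ x : ℝ, h x = if 0 ≤ x then θp * x else θm * x) :
    sSup {β : ℝ | 0 < β ∧ ∃ δ > (0:ℝ),
        ∀ x₁ ∈ Icc (-δ) δ, ∀ x₂ ∈ Icc (-δ) δ,
          β * |x₁ - x₂| ≤ |h x₁ - h x₂|} = min |θp| |θm| := by
  have hp0 : θp ≠ 0 := by rintro rfl; simp at hθ
  have hm0 : θm ≠ 0 := by rintro rfl; simp at hθ
  have hmpos : 0 < min |θp| |θm| := lt_min (abs_pos.2 hp0) (abs_pos.2 hm0)
  have hmain : ∀ x₁ x₂ : ℝ, min |θp| |θm| * |x₁ - x₂| ≤ |h x₁ - h x₂| := by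
    intro x₁ x₂
    rw [hh, hh]
    split_ifs with h1 h2 h2
    · rw [← mul_sub, abs_mul]
      exact mul_le_mul_of_nonneg_right (min_le_left _ _) (abs_nonneg _)
    · -- x₁ ≥ 0 > x₂
      rcases mul_pos_iff.mp hθ with ⟨hm, hp⟩ | ⟨hm, hp⟩
      · rw [abs_of_pos hp, abs_of_pos hm,
          abs_of_nonneg (by nlinarith : (0:ℝ) ≤ x₁ - x₂),
          abs_of_nonneg (by nlinarith : (0:ℝ) ≤ θp * x₁ - θm * x₂)]
        nlinarith [min_le_left θp θm, min_le_right θp θm]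
      · rw [abs_of_neg hp, abs_of_neg hm,
          abs_of_nonneg (by nlinarith : (0:ℝ) ≤ x₁ - x₂),
          abs_of_nonpos (by nlinarith : θp * x₁ - θm * x₂ ≤ 0)]
        nlinarith [min_le_left (-θp) (-θm), min_le_right (-θp) (-θm)]
    · -- x₂ ≥ 0 > x₁
      rcases mul_pos_iff.mp hθ with ⟨hm, hp⟩ | ⟨hm, hp⟩
      · rw [abs_of_pos hp, abs_of_pos hm,
          abs_of_nonpos (by nlinarith : x₁ - x₂ ≤ 0),
          abs_of_nonpos (by nlinarith : θm * x₁ - θp * x₂ ≤ 0)]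
        nlinarith [min_le_left θp θm, min_le_right θp θm]
      · rw [abs_of_neg hp, abs_of_neg hm,
          abs_of_nonpos (by nlinarith : x₁ - x₂ ≤ 0),
          abs_of_nonneg (by nlinarith : (0:ℝ) ≤ θm * x₁ - θp * x₂)]
        nlinarith [min_le_left (-θp) (-θm), min_le_right (-θp) (-θm)]
    · rw [← mul_sub, abs_mul]
      exact mul_le_mul_of_nonneg_right (min_le_right _ _) (abs_nonneg _)
  have hmem : min |θp| |θm| ∈ {β : ℝ | 0 < β ∧ ∃ δ > (0:ℝ),
      ∀ x₁ ∈ Icc (-δ) δ, ∀ x₂ ∈ Icc (-δ) δ,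
        β * |x₁ - x₂| ≤ |h x₁ - h x₂|} :=
    ⟨hmpos, 1, one_pos, fun x₁ _ x₂ _ => hmain x₁ x₂⟩
  have hub : ∀ β ∈ {β : ℝ | 0 < β ∧ ∃ δ > (0:ℝ),
      ∀ x₁ ∈ Icc (-δ) δ, ∀ x₂ ∈ Icc (-δ) δ,
        β * |x₁ - x₂| ≤ |h x₁ - h x₂|}, β ≤ min |θp| |θm| := by
    rintro β ⟨hβ, δ, hδ, H⟩
    have h0 : h 0 = 0 := by rw [hh]; simp
    have hmemδ : δ ∈ Icc (-δ) δ := ⟨by linarith, le_refl δ⟩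
    have hmem0 : (0:ℝ) ∈ Icc (-δ) δ := ⟨by linarith, le_of_lt hδ⟩
    have hmemδ' : -δ ∈ Icc (-δ) δ := ⟨le_refl _, by linarith⟩
    refine le_min ?_ ?_
    · have := H δ hmemδ 0 hmem0
      rw [h0, hh, if_pos (le_of_lt hδ), sub_zero, sub_zero,
        abs_of_pos hδ, abs_mul, abs_of_pos hδ] at this
      exact le_of_mul_le_mul_right this hδ
    · have := H (-δ) hmemδ' 0 hmem0
      rw [h0, hh, if_neg (by linarith), sub_zero, sub_zero,
        abs_neg, abs_of_pos hδ, abs_mul, abs_neg, abs_of_pos hδ] at this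
      exact le_of_mul_le_mul_right this hδ
  exact le_antisymm (csSup_le ⟨_, hmem⟩ hub) (le_csSup ⟨_, hub⟩ hmem)
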